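/- Let $A_0 \in \mathbb{R}^{n\times n}$ be invertible with Jordan form $A_0 = V \begin{pmatrix} I_m & 0 \\ 0 & U \end{pmatrix} V^{-1}$ where $1$ is not an eigenvalue of $U$, and let $A_1 \in \mathbb{R}^{n\times n}$ be invertible. Define $E(\varepsilon) = V \begin{pmatrix} \varepsilon^{-1} I_m & 0 \\ 0 & I_{n-m} \end{pmatrix} V^{-1}$ for $\varepsilon \neq 0$. Then there exists $\delta > 0$ such that for all $0 < |\varepsilon| < \delta$, the matrix $E(\varepsilon)\,(A_0 + \varepsilon A_1 - I_n)$ is invertible. -/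
import Mathlib


open Matrix Polynomial

private lemma eval_charpoly_aux {n : Type*} [DecidableEq n] [Fintype n]
    (M : Matrix n n ℝ) (t : ℝ) :
    (Matrix.charpoly M).eval t = (t • (1 : Matrix n n ℝ) - M).det := by
  rw [Matrix.charpoly, ← Polynomial.coe_evalRingHom, RingHom.map_det]
  congr 1
  ext i j
  by_cases h : i = j
  · subst h
    simp [Matrix.map_apply, Matrix.sub_apply, Matrix.smul_apply, Matrix.one_apply]
  · simp [Matrix.map_apply, Matrix.sub_apply, Matrix.smul_apply, Matrix.one_apply, h,
      charmatrix_apply_ne M i j h]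

/-- If `A₀ = V·diag(Iₘ, U)·V⁻¹` with `1` not an eigenvalue of `U`, `A₁` invertible,
and `E(ε) = V·diag(ε⁻¹Iₘ, I)·V⁻¹`, then `E(ε)(A₀ + εA₁ - I)` is invertible for all
sufficiently small `ε ≠ 0`. -/
theorem nearby_fixed_points_full_rank
    (m k : ℕ)
    (V A₁ : Matrix (Fin m ⊕ Fin k) (Fin m ⊕ Fin k) ℝ)
    (U : Matrix (Fin k) (Fin k) ℝ)
    (hV : IsUnit V)
    (hU : IsUnit (U - 1))
    (hA₁ : IsUnit A₁)
    (A₀ : Matrix (Fin m ⊕ Fin k) (Fin m ⊕ Fin k) ℝ)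
    (hA₀ : A₀ = V * fromBlocks 1 0 0 U * V⁻¹)
    (E : ℝ → Matrix (Fin m ⊕ Fin k) (Fin m ⊕ Fin k) ℝ)
    (hE : ∀ ε : ℝ, ε ≠ 0 → E ε = V * fromBlocks (ε⁻¹ • 1) 0 0 1 * V⁻¹) :
    ∃ δ > 0, ∀ ε : ℝ, 0 < |ε| → |ε| < δ →
      IsUnit (E ε * (A₀ + ε • A₁ - 1)) := by
  classical
  -- the determinant as a polynomial in ε
  set Mp : Matrix (Fin m ⊕ Fin k) (Fin m ⊕ Fin k) (Polynomial ℝ) :=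
    (A₀ - 1).map Polynomial.C + (Polynomial.X : Polynomial ℝ) • A₁.map Polynomial.C with hMp
  set P : Polynomial ℝ := Mp.det with hP
  have heval : ∀ ε : ℝ, P.eval ε = (A₀ + ε • A₁ - 1).det := by
    intro ε
    have h1 : (Polynomial.evalRingHom ε) P = (Mp.map (Polynomial.evalRingHom ε)).det :=
      RingHom.map_det _ _
    have h2 : Mp.map (Polynomial.evalRingHom ε) = A₀ + ε • A₁ - 1 := by
      ext i j
      simp [hMp, Matrix.map_apply, Matrix.add_apply, Matrix.sub_apply, Matrix.smul_apply,
        smul_eq_mul]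
      ring
    rw [← h2]
    exact h1
  have hA₁det : A₁.det ≠ 0 := by
    have := (Matrix.isUnit_iff_isUnit_det A₁).mp hA₁
    exact this.ne_zero
  -- P is not the zero polynomial
  have hPne : P ≠ 0 := by
    intro h0
    set Cm : Matrix (Fin m ⊕ Fin k) (Fin m ⊕ Fin k) ℝ := A₁⁻¹ * (A₀ - 1) with hCm
    have hq : Matrix.charpoly (-Cm) ≠ 0 := (Matrix.charpoly_monic _).ne_zero
    apply hq
    apply Polynomial.funext
    intro t
    have hfact : A₀ + t • A₁ - 1 = A₁ * (t • 1 + Cm) := by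
      rw [hCm, Matrix.mul_add, ← Matrix.mul_assoc,
        Matrix.mul_nonsing_inv A₁ ((Matrix.isUnit_iff_isUnit_det A₁).mp hA₁)]
      simp [Matrix.mul_smul]
      abel
    have h1 : P.eval t = 0 := by rw [h0]; simp
    rw [heval t, hfact, Matrix.det_mul] at h1
    have h2 : (t • (1 : Matrix (Fin m ⊕ Fin k) (Fin m ⊕ Fin k) ℝ) + Cm).det = 0 := by
      rcases mul_eq_zero.mp h1 with h | h
      · exact absurd h hA₁det
      · exact h
    rw [eval_charpoly_aux, sub_neg_eq_add, h2, eval_zero]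
  -- choose δ smaller than every nonzero root of P
  set s : Finset ℝ := P.roots.toFinset.erase 0 with hs
  have key : ∀ δ : ℝ, 0 < δ → (∀ r ∈ s, δ ≤ |r|) →
      ∀ ε : ℝ, 0 < |ε| → |ε| < δ → IsUnit (E ε * (A₀ + ε • A₁ - 1)) := by
    intro δ hδ hδs ε hε1 hε2
    have hεne : ε ≠ 0 := by
      intro h; rw [h] at hε1; simp at hε1
    have hroot : P.eval ε ≠ 0 := by
      intro h
      have hmem : ε ∈ s := by
        rw [hs, Finset.mem_erase, Multiset.mem_toFinset]
        exact ⟨hεne, (Polynomial.mem_roots hPne).mpr h⟩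
      exact absurd (hδs ε hmem) (by linarith)
    have hdet : (A₀ + ε • A₁ - 1).det ≠ 0 := by rwa [← heval]
    have hunit1 : IsUnit (A₀ + ε • A₁ - 1) :=
      (Matrix.isUnit_iff_isUnit_det _).mpr (isUnit_iff_ne_zero.mpr hdet)
    have hblock : IsUnit (fromBlocks (ε⁻¹ • (1 : Matrix (Fin m) (Fin m) ℝ)) 0 0
        (1 : Matrix (Fin k) (Fin k) ℝ)) := by
      rw [Matrix.isUnit_iff_isUnit_det, Matrix.det_fromBlocks_zero₂₁, Matrix.det_smul,
        Matrix.det_one, Matrix.det_one]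
      simp only [mul_one]
      exact isUnit_iff_ne_zero.mpr (pow_ne_zero _ (inv_ne_zero hεne))
    have hEunit : IsUnit (E ε) := by
      rw [hE ε hεne]
      exact (hV.mul hblock).mul (Matrix.isUnit_nonsing_inv_iff.mpr hV)
    exact hEunit.mul hunit1
  set δ : ℝ := ((insert 1 (s.image (fun r => |r|))).min' (Finset.insert_nonempty _ _)) with hδdef
  have hδpos : 0 < δ := by
    have hmem := (insert 1 (s.image (fun r => |r|))).min'_mem (Finset.insert_nonempty _ _)
    rw [← hδdef] at hmem
    rcases Finset.mem_insert.mp hmem with h | h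
    · rw [h]; exact one_pos
    · obtain ⟨r, hr, hrmin⟩ := Finset.mem_image.mp h
      have : r ≠ 0 := (Finset.mem_erase.mp hr).1
      rw [← hrmin]
      exact abs_pos.mpr this
  have hδle : ∀ r ∈ s, δ ≤ |r| := fun r hr =>
    Finset.min'_le _ _ (Finset.mem_insert_of_mem (Finset.mem_image_of_mem _ hr))
  exact ⟨δ, hδpos, key δ hδpos hδle⟩
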